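/- Let X be a Banach space and (X_k)_{k≥1} a sequence of closed subspaces. Define Δ(S) = {x ∈ X : liminf_{k→∞} dist(x, X_k) = 0}. If the closure of the linear span of Δ(S) equals X, then (X_k) is a representing system of subspaces in X: every x ∈ X can be written as a convergent series x = Σ_{k=1}^∞ x_k with x_k ∈ X_k. -/

import Mathlib

open Filter Finset

set_option linter.unusedSectionVars false
set_option maxHeartbeats 1000000

/-- The set `Δ(S) = {x | liminf_k dist(x, X_k) = 0}`. -/
def DeltaSet {E : Type*} [NormedAddCommGroup E] [NormedSpace ℝ E]
    (X : ℕ → Submodule ℝ E) : Set E :=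
  {x | Filter.liminf (fun k => Metric.infDist x (X k : Set E)) atTop = 0}

section Helpers

variable {E : Type*} [NormedAddCommGroup E] [NormedSpace ℝ E]

/-- `u` can be approximated, with partial-sum control, by a finite block of vectors from
the subspaces `X k` with indices in `[N, M)`, for any `ε > 0` and any starting index `N`. -/
def BlockApx (X : ℕ → Submodule ℝ E) (u : E) : Prop :=
  ∀ ε : ℝ, 0 < ε → ∀ N : ℕ, ∃ M : ℕ, N ≤ M ∧ ∃ y : ℕ → E,
    (∀ k, y k ∈ X k) ∧ (∀ k, k < N → y k = 0) ∧ (∀ k, M ≤ k → y k = 0) ∧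
    ‖u - ∑ k ∈ range M, y k‖ ≤ ε ∧ (∀ m, ‖∑ k ∈ range m, y k‖ ≤ ‖u‖ + ε)

lemma sum_range_eq_of_zero (y : ℕ → E) {a b : ℕ} (h : a ≤ b) (h0 : ∀ k, a ≤ k → y k = 0) :
    ∑ k ∈ range b, y k = ∑ k ∈ range a, y k :=
  (Finset.sum_subset (range_subset_range.2 h) (fun k _ hk' => h0 k (by simpa using hk'))).symm

lemma rep_zero (X : ℕ → Submodule ℝ E) : BlockApx X 0 := by
  intro ε hε N
  refine ⟨N, le_rfl, 0, fun k => Submodule.zero_mem _, fun _ _ => rfl, fun _ _ => rfl, ?_, ?_⟩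
  · simpa using hε.le
  · intro m; simpa using by positivity

lemma rep_smul (X : ℕ → Submodule ℝ E) (c : ℝ) {u : E} (hu : BlockApx X u) : BlockApx X (c • u) := by
  rcases eq_or_ne c 0 with rfl | hc
  · simpa using rep_zero X
  intro ε hε N
  have hc' : 0 < |c| := abs_pos.2 hc
  obtain ⟨M, hNM, y, hmem, hlo, hhi, herr, hpart⟩ := hu (ε / |c|) (by positivity) N
  refine ⟨M, hNM, fun k => c • y k, fun k => Submodule.smul_mem _ _ (hmem k),
    fun k hk => by simp [hlo k hk], fun k hk => by simp [hhi k hk], ?_, ?_⟩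
  · rw [← Finset.smul_sum, ← smul_sub, norm_smul, Real.norm_eq_abs]
    calc |c| * ‖u - ∑ k ∈ range M, y k‖ ≤ |c| * (ε / |c|) := by
          exact mul_le_mul_of_nonneg_left herr hc'.le
      _ = ε := by field_simp
  · intro m
    rw [← Finset.smul_sum, norm_smul, Real.norm_eq_abs, norm_smul, Real.norm_eq_abs]
    calc |c| * ‖∑ k ∈ range m, y k‖ ≤ |c| * (‖u‖ + ε / |c|) :=
          mul_le_mul_of_nonneg_left (hpart m) hc'.le
      _ = |c| * ‖u‖ + ε := by field_simp

lemma delta_approx (X : ℕ → Submodule ℝ E) {x : E} (hx : x ∈ DeltaSet X)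
    {ε : ℝ} (hε : 0 < ε) (N : ℕ) : ∃ k, N ≤ k ∧ ∃ y ∈ X k, ‖x - y‖ < ε := by
  have hco : IsCoboundedUnder (· ≥ ·) atTop (fun k => Metric.infDist x (X k : Set E)) := by
    apply isCoboundedUnder_ge_of_le atTop (x := ‖x‖)
    intro k
    simpa using Metric.infDist_le_dist_of_mem (Submodule.zero_mem (X k))
  have hfreq := Filter.frequently_lt_of_liminf_lt hco (by rw [hx]; exact hε)
  obtain ⟨k, hk, hlt⟩ := (Filter.frequently_atTop.1 hfreq) N
  obtain ⟨y, hy, hd⟩ := (Metric.infDist_lt_iff ⟨0, Submodule.zero_mem (X k)⟩).1 hlt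
  exact ⟨k, hk, y, hy, by rwa [← dist_eq_norm]⟩

lemma rep_delta (X : ℕ → Submodule ℝ E) {x : E} (hx : x ∈ DeltaSet X) : BlockApx X x := by
  intro ε hε N
  obtain ⟨k, hNk, y0, hy0, hd⟩ := delta_approx X hx hε N
  refine ⟨k + 1, by omega, fun i => if i = k then y0 else 0, ?_, ?_, ?_, ?_, ?_⟩
  · intro i
    by_cases hi : i = k
    · subst hi; simp [hy0]
    · simp [hi, Submodule.zero_mem]
  · intro i hi; simp [show i ≠ k by omega]
  · intro i hi; simp [show i ≠ k by omega]
  · rw [Finset.sum_ite_eq' (range (k + 1)) k]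
    simp only [Finset.mem_range, Nat.lt_succ_self, if_true]
    exact hd.le
  · intro m
    rw [Finset.sum_ite_eq' (range m) k]
    by_cases hm : k ∈ range m
    · rw [if_pos hm]
      calc ‖y0‖ ≤ ‖x‖ + ‖x - y0‖ := by
            have := norm_sub_norm_le x y0; linarith [abs_le.1 (abs_norm_sub_norm_le x y0)]
        _ ≤ ‖x‖ + ε := by linarith
    · rw [if_neg hm]; simp; positivity

lemma chain (X : ℕ → Submodule ℝ E) (v : ℕ → E) (hv : ∀ i, BlockApx X (v i))
    {B δ : ℝ} (hδ : 0 < δ) (hB : 0 ≤ B) (hvB : ∀ i, ‖v i‖ ≤ B) :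
    ∀ n N, ∃ M : ℕ, N ≤ M ∧ ∃ y : ℕ → E,
      (∀ k, y k ∈ X k) ∧ (∀ k, k < N → y k = 0) ∧ (∀ k, M ≤ k → y k = 0) ∧
      ‖(∑ i ∈ range n, v i) - ∑ k ∈ range M, y k‖ ≤ n * δ ∧
      (∀ m, ∃ i ≤ n, ‖(∑ k ∈ range m, y k) - ∑ j ∈ range i, v j‖ ≤ n * δ + B + δ) := by
  intro n
  induction n with
  | zero =>
    intro N
    refine ⟨N, le_rfl, 0, fun k => Submodule.zero_mem _, fun _ _ => rfl, fun _ _ => rfl,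
      by simp, fun m => ⟨0, le_rfl, by simp; positivity⟩⟩
  | succ n ih =>
    intro N
    obtain ⟨M₁, hNM₁, y₁, hmem₁, hlo₁, hhi₁, herr₁, hpart₁⟩ := ih N
    obtain ⟨M₂, hM₁M₂, y₂, hmem₂, hlo₂, hhi₂, herr₂, hpart₂⟩ := hv n δ hδ M₁
    refine ⟨M₂, le_trans hNM₁ hM₁M₂, fun k => y₁ k + y₂ k,
      fun k => Submodule.add_mem _ (hmem₁ k) (hmem₂ k),
      fun k hk => by simp [hlo₁ k hk, hlo₂ k (lt_of_lt_of_le hk hNM₁)],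
      fun k hk => by simp [hhi₁ k (le_trans hM₁M₂ hk), hhi₂ k hk], ?_, ?_⟩
    · have hsplit : ∑ k ∈ range M₂, (y₁ k + y₂ k)
          = (∑ k ∈ range M₁, y₁ k) + ∑ k ∈ range M₂, y₂ k := by
        rw [Finset.sum_add_distrib, sum_range_eq_of_zero y₁ hM₁M₂ hhi₁]
      rw [hsplit, Finset.sum_range_succ]
      calc ‖(∑ i ∈ range n, v i) + v n - ((∑ k ∈ range M₁, y₁ k) + ∑ k ∈ range M₂, y₂ k)‖
          ≤ ‖(∑ i ∈ range n, v i) - ∑ k ∈ range M₁, y₁ k‖ + ‖v n - ∑ k ∈ range M₂, y₂ k‖ := by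
            have : (∑ i ∈ range n, v i) + v n - ((∑ k ∈ range M₁, y₁ k) + ∑ k ∈ range M₂, y₂ k)
              = ((∑ i ∈ range n, v i) - ∑ k ∈ range M₁, y₁ k)
                + (v n - ∑ k ∈ range M₂, y₂ k) := by abel
            rw [this]; exact norm_add_le _ _
        _ ≤ n * δ + δ := add_le_add herr₁ herr₂
        _ = (n + 1 : ℕ) * δ := by push_cast; ring
    · intro m
      have hsplitm : ∑ k ∈ range m, (y₁ k + y₂ k)
          = (∑ k ∈ range m, y₁ k) + ∑ k ∈ range m, y₂ k := Finset.sum_add_distrib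
      rcases le_or_gt m M₁ with hm | hm
      · -- second block not started yet
        have h2 : ∑ k ∈ range m, y₂ k = 0 :=
          Finset.sum_eq_zero fun k hk => hlo₂ k (lt_of_lt_of_le (mem_range.1 hk) hm)
        obtain ⟨i, hi, hbd⟩ := hpart₁ m
        refine ⟨i, by omega, ?_⟩
        rw [hsplitm, h2, add_zero]
        calc ‖(∑ k ∈ range m, y₁ k) - ∑ j ∈ range i, v j‖ ≤ n * δ + B + δ := hbd
          _ ≤ (n + 1 : ℕ) * δ + B + δ := by push_cast; nlinarith
      · -- inside or past the second block
        have h1 : ∑ k ∈ range m, y₁ k = ∑ k ∈ range M₁, y₁ k :=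
          sum_range_eq_of_zero y₁ hm.le hhi₁
        refine ⟨n, by omega, ?_⟩
        rw [hsplitm, h1]
        have key : (∑ k ∈ range M₁, y₁ k) + (∑ k ∈ range m, y₂ k) - ∑ j ∈ range n, v j
            = ((∑ k ∈ range M₁, y₁ k) - ∑ j ∈ range n, v j) + ∑ k ∈ range m, y₂ k := by abel
        rw [key]
        calc ‖((∑ k ∈ range M₁, y₁ k) - ∑ j ∈ range n, v j) + ∑ k ∈ range m, y₂ k‖
            ≤ ‖(∑ k ∈ range M₁, y₁ k) - ∑ j ∈ range n, v j‖ + ‖∑ k ∈ range m, y₂ k‖ :=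
              norm_add_le _ _
          _ ≤ n * δ + (‖v n‖ + δ) := by
              have := hpart₂ m
              have h' : ‖(∑ k ∈ range M₁, y₁ k) - ∑ j ∈ range n, v j‖ ≤ n * δ := by
                rw [norm_sub_rev]; exact herr₁
              linarith
          _ ≤ (n + 1 : ℕ) * δ + B + δ := by
              have := hvB n; push_cast; nlinarith

lemma sum_alt (α β : E) (i : ℕ) :
    ∑ j ∈ range i, (if Even j then α else β)
      = ((i + 1) / 2 : ℕ) • α + ((i / 2 : ℕ)) • β := by
  induction i with
  | zero => simp
  | succ i ih =>
    rw [Finset.sum_range_succ, ih]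
    rcases Nat.even_or_odd i with h | h
    · rw [if_pos h]
      obtain ⟨t, rfl⟩ := h
      have h1 : (t + t + 1 + 1) / 2 = (t + t + 1) / 2 + 1 := by omega
      have h2 : (t + t + 1) / 2 = (t + t) / 2 := by omega
      rw [h1, h2, add_smul, one_smul]
      have h3 : (t + t + 1) / 2 = (t + t) / 2 := by omega
      abel
    · rw [if_neg (Nat.not_even_iff_odd.2 h)]
      obtain ⟨t, rfl⟩ := h
      have h1 : (2 * t + 1 + 1 + 1) / 2 = (2 * t + 1 + 1) / 2 := by omega
      have h2 : (2 * t + 1 + 1) / 2 = (2 * t + 1) / 2 + 1 := by omega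
      rw [h1, h2, succ_nsmul, succ_nsmul]
      abel

lemma rep_add (X : ℕ → Submodule ℝ E) {a b : E} (ha : BlockApx X a) (hb : BlockApx X b) :
    BlockApx X (a + b) := by
  intro ε hε N
  -- choose the number of pieces p
  obtain ⟨p0, hp0⟩ := exists_nat_gt ((‖a‖ + ‖b‖ + 1) * 4 / ε)
  set p := p0 + 1 with hp_def
  have hp_pos : 0 < p := Nat.succ_pos _
  have hpR : 0 < (p : ℝ) := by positivity
  have hpB : (‖a‖ + ‖b‖ + 1) / p ≤ ε / 4 := by
    rw [div_le_div_iff₀ hpR (by norm_num)]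
    have h1 : (‖a‖ + ‖b‖ + 1) * 4 / ε < p := lt_of_lt_of_le hp0 (by exact_mod_cast Nat.le_succ p0)
    rw [div_lt_iff₀ hε] at h1
    nlinarith
  set α := (p : ℝ)⁻¹ • a with hα
  set β := (p : ℝ)⁻¹ • b with hβ
  set v : ℕ → E := fun j => if Even j then α else β with hv_def
  have hv : ∀ i, BlockApx X (v i) := by
    intro i
    by_cases h : Even i
    · simpa [hv_def, h] using rep_smul X (p : ℝ)⁻¹ ha
    · simpa [hv_def, h] using rep_smul X (p : ℝ)⁻¹ hb
  set B : ℝ := (‖a‖ + ‖b‖ + 1) / p with hB_def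
  have hB0 : 0 < B := by positivity
  have hαn : ‖α‖ ≤ B := by
    rw [hα, norm_smul, norm_inv, Real.norm_natCast, hB_def, div_eq_inv_mul]
    exact mul_le_mul_of_nonneg_left (by linarith [norm_nonneg b]) (by positivity)
  have hβn : ‖β‖ ≤ B := by
    rw [hβ, norm_smul, norm_inv, Real.norm_natCast, hB_def, div_eq_inv_mul]
    exact mul_le_mul_of_nonneg_left (by linarith [norm_nonneg a]) (by positivity)
  have hvB : ∀ i, ‖v i‖ ≤ B := by
    intro i
    rw [hv_def]
    by_cases h : Even i
    · simpa [h] using hαn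
    · simpa [h] using hβn
  set δ : ℝ := ε / (4 * (2 * p + 1)) with hδ_def
  have hδ : 0 < δ := by positivity
  clear_value p α β v B δ
  obtain ⟨M, hNM, y, hmem, hlo, hhi, herr, hpart⟩ := chain X v hv hδ hB0.le hvB (2 * p) N
  -- total sum of v over range (2p) is a + b
  have hVtot : ∑ i ∈ range (2 * p), v i = a + b := by
    rw [hv_def, sum_alt]
    have h1 : (2 * p + 1) / 2 = p := by omega
    have h2 : (2 * p) / 2 = p := by omega
    rw [h1, h2, hα, hβ, ← Nat.cast_smul_eq_nsmul ℝ, ← Nat.cast_smul_eq_nsmul ℝ, smul_smul,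
      smul_smul, mul_inv_cancel₀ (ne_of_gt hpR), one_smul, one_smul]
  have hδsum : (2 * (p : ℝ) + 1) * δ = ε / 4 := by
    rw [hδ_def]; field_simp
  -- bound on the partial sums of v
  have hVbound : ∀ i, i ≤ 2 * p → ‖∑ j ∈ range i, v j‖ ≤ ‖a + b‖ + ε / 4 := by
    intro i hi
    have hval : ∑ j ∈ range i, v j = ((i + 1) / 2 : ℕ) • α + ((i / 2 : ℕ)) • β := by
      rw [hv_def]; exact sum_alt α β i
    set e := (i + 1) / 2 with he_def
    set o := i / 2 with ho_def
    have heo : e = o ∨ e = o + 1 := by omega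
    have hep : e ≤ p := by omega
    have hop : o ≤ p := by omega
    have hsum_ab : ‖α + β‖ = (p : ℝ)⁻¹ * ‖a + b‖ := by
      rw [hα, hβ, ← smul_add, norm_smul, norm_inv, Real.norm_natCast]
    have hoab : (o : ℝ) * ‖α + β‖ ≤ ‖a + b‖ := by
      rw [hsum_ab]
      have h1 : (o : ℝ) ≤ (p : ℝ) := by exact_mod_cast hop
      have h2 : 0 ≤ ‖a + b‖ := norm_nonneg _
      rw [← mul_assoc]
      calc (o : ℝ) * (p : ℝ)⁻¹ * ‖a + b‖ ≤ 1 * ‖a + b‖ := by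
            apply mul_le_mul_of_nonneg_right _ h2
            rw [← div_eq_mul_inv, div_le_one hpR]; exact h1
        _ = ‖a + b‖ := one_mul _
    rcases heo with h | h
    · rw [hval, h]
      have hh : o • α + o • β = o • (α + β) := (smul_add _ _ _).symm
      rw [hh, ← Nat.cast_smul_eq_nsmul ℝ, norm_smul, Real.norm_natCast]
      have h3 : (0:ℝ) ≤ ε / 4 := by positivity
      linarith [hoab]
    · rw [hval, h]
      have hrw : ((o + 1) : ℕ) • α + o • β = o • (α + β) + α := by
        rw [succ_nsmul, smul_add]; abel
      rw [hrw]
      calc ‖o • (α + β) + α‖ ≤ ‖o • (α + β)‖ + ‖α‖ := norm_add_le _ _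
        _ = (o : ℝ) * ‖α + β‖ + ‖α‖ := by
            rw [← Nat.cast_smul_eq_nsmul ℝ, norm_smul, Real.norm_natCast]
        _ ≤ ‖a + b‖ + ε / 4 := by linarith [hαn.trans hpB]
  refine ⟨M, hNM, y, hmem, hlo, hhi, ?_, ?_⟩
  · rw [hVtot] at herr
    refine le_trans herr ?_
    push_cast
    linarith [hδ.le]
  · intro m
    obtain ⟨i, hi, hbd⟩ := hpart m
    have hVi := hVbound i hi
    have h1 : ‖∑ k ∈ range m, y k‖
        ≤ ‖∑ j ∈ range i, v j‖ + ‖(∑ k ∈ range m, y k) - ∑ j ∈ range i, v j‖ := by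
      have := norm_add_le (∑ j ∈ range i, v j) ((∑ k ∈ range m, y k) - ∑ j ∈ range i, v j)
      simpa using this
    have h2 : ((2 * p : ℕ) : ℝ) * δ + B + δ ≤ ε / 2 := by
      push_cast
      linarith [hpB]
    linarith

lemma rep_span (X : ℕ → Submodule ℝ E) :
    ∀ u ∈ Submodule.span ℝ (DeltaSet X), BlockApx X u := by
  intro u hu
  induction hu using Submodule.span_induction with
  | mem z hz => exact rep_delta X hz
  | zero => exact rep_zero X
  | add z w _ _ hz hw => exact rep_add X hz hw
  | smul c z _ hz => exact rep_smul X c hz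

lemma step (X : ℕ → Submodule ℝ E)
    (hdense : (Submodule.span ℝ (DeltaSet X)).topologicalClosure = ⊤)
    (r : E) {δ : ℝ} (hδ : 0 < δ) (N : ℕ) :
    ∃ M : ℕ, N < M ∧ ∃ y : ℕ → E, (∀ k, y k ∈ X k) ∧ (∀ k, k < N → y k = 0) ∧
      (∀ k, M ≤ k → y k = 0) ∧ ‖r - ∑ k ∈ range M, y k‖ ≤ δ ∧
      ∀ m, ‖∑ k ∈ range m, y k‖ ≤ ‖r‖ + δ := by
  have hr : r ∈ closure ((Submodule.span ℝ (DeltaSet X)) : Set E) := by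
    rw [← Submodule.topologicalClosure_coe, hdense]
    trivial
  obtain ⟨u, hu, hdu⟩ := Metric.mem_closure_iff.1 hr (δ / 2) (by positivity)
  have hru : ‖r - u‖ < δ / 2 := by rwa [← dist_eq_norm]
  have hun : ‖u‖ ≤ ‖r‖ + δ / 2 := by
    have h2 : ‖u‖ - ‖r‖ ≤ ‖u - r‖ := norm_sub_norm_le u r
    rw [norm_sub_rev] at h2
    linarith
  obtain ⟨M₀, hNM₀, y, hmem, hlo, hhi, herr, hpart⟩ := rep_span X u hu (δ / 2) (by positivity) N
  refine ⟨M₀ + 1, by omega, y, hmem, hlo, fun k hk => hhi k (by omega), ?_, ?_⟩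
  · rw [sum_range_eq_of_zero y (Nat.le_succ M₀) hhi]
    calc ‖r - ∑ k ∈ range M₀, y k‖
        ≤ ‖r - u‖ + ‖u - ∑ k ∈ range M₀, y k‖ := by
          have : r - ∑ k ∈ range M₀, y k = (r - u) + (u - ∑ k ∈ range M₀, y k) := by abel
          rw [this]; exact norm_add_le _ _
      _ ≤ δ := by linarith
  · intro m
    calc ‖∑ k ∈ range m, y k‖ ≤ ‖u‖ + δ / 2 := hpart m
      _ ≤ ‖r‖ + δ := by linarith

theorem main_thm (X : ℕ → Submodule ℝ E)
    (hdense : (Submodule.span ℝ (DeltaSet X)).topologicalClosure = ⊤) :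
    ∀ x : E, ∃ f : ℕ → E, (∀ k, f k ∈ X k) ∧
      Tendsto (fun n => ∑ k ∈ Finset.range n, f k) atTop (nhds x) := by
  intro x
  classical
  have hstep : ∀ (j N : ℕ) (r : E), ∃ q : ℕ × (ℕ → E), N < q.1 ∧ (∀ k, q.2 k ∈ X k) ∧
      (∀ k, k < N → q.2 k = 0) ∧ (∀ k, q.1 ≤ k → q.2 k = 0) ∧
      ‖r - ∑ k ∈ range q.1, q.2 k‖ ≤ (1/2 : ℝ) ^ (j + 1) ∧
      ∀ m, ‖∑ k ∈ range m, q.2 k‖ ≤ ‖r‖ + (1/2 : ℝ) ^ (j + 1) := by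
    intro j N r
    obtain ⟨M, h1, y, h2, h3, h4, h5, h6⟩ := step X hdense r (by positivity :
      (0:ℝ) < (1/2 : ℝ) ^ (j + 1)) N
    exact ⟨(M, y), h1, h2, h3, h4, h5, h6⟩
  choose q hq1 hq2 hq3 hq4 hq5 hq6 using hstep
  let G : ℕ → ℕ × E := fun j => Nat.rec (0, x)
    (fun j s => ((q j s.1 s.2).1, s.2 - ∑ k ∈ range (q j s.1 s.2).1, (q j s.1 s.2).2 k)) j
  let Nf : ℕ → ℕ := fun j => (G j).1
  let rf : ℕ → E := fun j => (G j).2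
  let Y : ℕ → ℕ → E := fun j => (q j (Nf j) (rf j)).2
  have hN0 : Nf 0 = 0 := rfl
  have hr0 : rf 0 = x := rfl
  have hNsucc : ∀ j, Nf (j + 1) = (q j (Nf j) (rf j)).1 := fun j => rfl
  have hrsucc : ∀ j, rf (j + 1) = rf j - ∑ k ∈ range (Nf (j + 1)), Y j k := fun j => rfl
  have hNlt : ∀ j, Nf j < Nf (j + 1) := fun j => by
    rw [hNsucc]; exact hq1 j (Nf j) (rf j)
  have hmem : ∀ j k, Y j k ∈ X k := fun j k => hq2 j (Nf j) (rf j) k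
  have hlo : ∀ j k, k < Nf j → Y j k = 0 := fun j k hk => hq3 j (Nf j) (rf j) k hk
  have hhi : ∀ j k, Nf (j + 1) ≤ k → Y j k = 0 := fun j k hk =>
    hq4 j (Nf j) (rf j) k (by rwa [← hNsucc])
  have herr : ∀ j, ‖rf j - ∑ k ∈ range (Nf (j + 1)), Y j k‖ ≤ (1/2 : ℝ) ^ (j + 1) :=
    fun j => by rw [hNsucc]; exact hq5 j (Nf j) (rf j)
  have hpart : ∀ j m, ‖∑ k ∈ range m, Y j k‖ ≤ ‖rf j‖ + (1/2 : ℝ) ^ (j + 1) :=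
    fun j m => hq6 j (Nf j) (rf j) m
  have hrnorm : ∀ j, ‖rf (j + 1)‖ ≤ (1/2 : ℝ) ^ (j + 1) := fun j => by
    rw [hrsucc]; exact herr j
  have hNmono : StrictMono Nf := strictMono_nat_of_lt_succ hNlt
  have hNge : ∀ j, j ≤ Nf j := fun j => by
    induction j with
    | zero => simp [hN0]
    | succ j ih => have := hNlt j; omega
  have hxr : ∀ j, x - rf j = ∑ i ∈ range j, ∑ k ∈ range (Nf (i + 1)), Y i k := by
    intro j
    induction j with
    | zero => simp [hr0]
    | succ j ih => rw [Finset.sum_range_succ, ← ih, hrsucc]; abel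
  refine ⟨fun k => ∑ j ∈ range (k + 1), Y j k, fun k => Submodule.sum_mem _ (fun j _ => hmem j k), ?_⟩
  have hS : ∀ m, ∑ k ∈ range m, ∑ j ∈ range (k + 1), Y j k
      = ∑ j ∈ range m, ∑ k ∈ range m, Y j k := by
    intro m
    rw [← Finset.sum_comm]
    apply Finset.sum_congr rfl
    intro k hk
    apply Finset.sum_subset (range_subset_range.2 (mem_range.1 hk))
    intro j _ hj
    have hkj : k < j := by simp only [mem_range] at hj ⊢; omega
    exact hlo j k (lt_of_lt_of_le hkj (hNge j))
  rw [Metric.tendsto_atTop]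
  intro ε hε
  obtain ⟨J₀, hJ₀⟩ : ∃ n : ℕ, (1/2 : ℝ) ^ n < ε / 3 := by
    exact exists_pow_lt_of_lt_one (by positivity) (by norm_num)
  refine ⟨Nf (J₀ + 1), fun m hm => ?_⟩
  have hex : ∃ j, m < Nf j := ⟨m + 1, lt_of_lt_of_le (Nat.lt_succ_self m) (hNge (m + 1))⟩
  obtain ⟨J, hJeq⟩ : ∃ J, Nat.find hex = J + 1 := by
    refine ⟨Nat.find hex - 1, ?_⟩
    have hpos : 0 < Nat.find hex := by
      rcases Nat.eq_zero_or_pos (Nat.find hex) with h | h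
      · exfalso; have := Nat.find_spec hex; rw [h, hN0] at this; omega
      · exact h
    omega
  have hmJ : m < Nf (J + 1) := by rw [← hJeq]; exact Nat.find_spec hex
  have hJm : Nf J ≤ m := by
    have := Nat.find_min hex (show J < Nat.find hex by omega)
    omega
  have hJge : J₀ + 1 ≤ J := by
    by_contra h
    have hle : Nf (J + 1) ≤ Nf (J₀ + 1) := hNmono.monotone (show J + 1 ≤ J₀ + 1 by omega)
    omega
  -- decompose the partial sum
  have hTfull : ∀ j, j < J → ∑ k ∈ range m, Y j k = ∑ k ∈ range (Nf (j + 1)), Y j k :=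
    fun j hj => sum_range_eq_of_zero (Y j)
      (le_trans (hNmono.monotone (by omega : j + 1 ≤ J)) hJm) (hhi j)
  have hdecomp : ∑ j ∈ range m, ∑ k ∈ range m, Y j k
      = (∑ j ∈ range J, ∑ k ∈ range (Nf (j + 1)), Y j k) + ∑ k ∈ range m, Y J k := by
    have hJle : J ≤ m := le_trans (hNge J) hJm
    rcases lt_or_eq_of_le hJle with hJlt | hJeq'
    · have h1 : ∑ j ∈ range m, ∑ k ∈ range m, Y j k
          = ∑ j ∈ range (J + 1), ∑ k ∈ range m, Y j k := by
        symm
        apply Finset.sum_subset (range_subset_range.2 (by omega))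
        intro j _ hj
        have hJj : J < j := by simp only [mem_range] at hj ⊢; omega
        exact Finset.sum_eq_zero fun k hk => hlo j k
          (lt_of_lt_of_le (lt_of_lt_of_le (mem_range.1 hk) hmJ.le)
            (hNmono.monotone (show J + 1 ≤ j by omega)))
      rw [h1, Finset.sum_range_succ]
      congr 1
      exact Finset.sum_congr rfl fun j hj => hTfull j (mem_range.1 hj)
    · have hmN : ∑ k ∈ range m, Y J k = 0 := by
        apply Finset.sum_eq_zero
        intro k hk
        apply hlo J k
        have hk' := mem_range.1 hk
        have hNfJ : Nf J = m := le_antisymm hJm (hJeq' ▸ hNge J)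
        omega
      rw [hmN, add_zero]
      calc ∑ j ∈ range m, ∑ k ∈ range m, Y j k
          = ∑ j ∈ range J, ∑ k ∈ range m, Y j k := by rw [hJeq']
        _ = ∑ j ∈ range J, ∑ k ∈ range (Nf (j + 1)), Y j k :=
            Finset.sum_congr rfl fun j hj => hTfull j (mem_range.1 hj)
  rw [dist_eq_norm, hS, hdecomp]
  have hkey : (∑ j ∈ range J, ∑ k ∈ range (Nf (j + 1)), Y j k) + (∑ k ∈ range m, Y J k) - x
      = (∑ k ∈ range m, Y J k) - rf J := by
    rw [← hxr J]; abel
  rw [hkey]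
  obtain ⟨J', rfl⟩ : ∃ J', J = J' + 1 := ⟨J - 1, by omega⟩
  have hrJ : ‖rf (J' + 1)‖ ≤ (1/2 : ℝ) ^ (J' + 1) := hrnorm J'
  have hTm : ‖∑ k ∈ range m, Y (J' + 1) k‖ ≤ ‖rf (J' + 1)‖ + (1/2 : ℝ) ^ (J' + 2) :=
    hpart (J' + 1) m
  have hpow1 : (1/2 : ℝ) ^ (J' + 1) ≤ (1/2 : ℝ) ^ (J₀ + 1) :=
    pow_le_pow_of_le_one (by norm_num) (by norm_num) (by omega)
  have hpow2 : (1/2 : ℝ) ^ (J₀ + 1) = (1/2 : ℝ) ^ J₀ * (1/2) := pow_succ _ _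
  have hpow3 : (1/2 : ℝ) ^ (J' + 2) ≤ (1/2 : ℝ) ^ (J' + 1) :=
    pow_le_pow_of_le_one (by norm_num) (by norm_num) (by omega)
  calc ‖(∑ k ∈ range m, Y (J' + 1) k) - rf (J' + 1)‖
      ≤ ‖∑ k ∈ range m, Y (J' + 1) k‖ + ‖rf (J' + 1)‖ := norm_sub_le _ _
    _ < ε := by nlinarith [pow_pos (by norm_num : (0:ℝ) < 1/2) J₀]


end Helpers

/-- If the closed linear span of `Δ(S)` is all of `X`, then `(X_k)` is a representing
system of subspaces in the Banach space `X`. -/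
theorem rss_of_dense_delta {E : Type*} [NormedAddCommGroup E] [NormedSpace ℝ E]
    [CompleteSpace E] (X : ℕ → Submodule ℝ E) (hX : ∀ k, IsClosed (X k : Set E))
    (hdense : (Submodule.span ℝ (DeltaSet X)).topologicalClosure = ⊤) :
    ∀ x : E, ∃ f : ℕ → E, (∀ k, f k ∈ X k) ∧
      Tendsto (fun n => ∑ k ∈ Finset.range n, f k) atTop (nhds x) :=
  main_thm X hdense
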